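/- Let α be a partial action of a topological group G on a topological space X. Then the relation ∼ on G × X defined by (r,x) ∼ (s,y) iff x ∈ X_{r⁻¹s} and α_{s⁻¹r}(x) = y is an equivalence relation. -/

import Mathlib

/-- A partial action of a topological group `G` on a topological space `X`:
a family `dom t` of open subsets of `X` together with maps `act t` restricting to
homeomorphisms `dom t⁻¹ → dom t`, such that the domain of the global map is open,
the map `(t, x) ↦ act t x` is continuous there, `dom 1 = X`, `act 1 = id`, and
`act (s * t)` extends `act s ∘ act t`. -/
structure TopPartialAction (G : Type*) (X : Type*) [Group G] [TopologicalSpace G]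
    [IsTopologicalGroup G] [TopologicalSpace X] where
  dom : G → Set X
  act : G → X → X
  isOpen_dom : ∀ t, IsOpen (dom t)
  bijOn : ∀ t, Set.BijOn (act t) (dom t⁻¹) (dom t)
  isOpen_graph : IsOpen {p : G × X | p.2 ∈ dom p.1⁻¹}
  continuousOn : ContinuousOn (fun p : G × X => act p.1 p.2) {p : G × X | p.2 ∈ dom p.1⁻¹}
  dom_one : dom 1 = Set.univ
  act_one : ∀ x, act 1 x = x
  act_comp : ∀ s t x, x ∈ dom t⁻¹ → act t x ∈ dom s⁻¹ →
    x ∈ dom (s * t)⁻¹ ∧ act (s * t) x = act s (act t x)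

/-- The relation `(r, x) ∼ (s, y) ↔ x ∈ X_{r⁻¹ s} ∧ α_{s⁻¹ r}(x) = y` on `G × X`. -/
def TopPartialAction.rel {G X : Type*} [Group G] [TopologicalSpace G] [IsTopologicalGroup G]
    [TopologicalSpace X] (α : TopPartialAction G X) (p q : G × X) : Prop :=
  p.2 ∈ α.dom (p.1⁻¹ * q.1) ∧ α.act (q.1⁻¹ * p.1) p.2 = q.2

/-- The relation `∼` associated with a partial action is an equivalence relation. -/
theorem TopPartialAction.rel_equivalence {G X : Type*} [Group G] [TopologicalSpace G]
    [IsTopologicalGroup G] [TopologicalSpace X] (α : TopPartialAction G X) :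
    Equivalence α.rel := by
  constructor
  · intro p
    refine ⟨by simp [α.dom_one], by simpa using α.act_one p.2⟩
  · rintro ⟨r, x⟩ ⟨s, y⟩ ⟨hx, hy⟩
    have hxd : x ∈ α.dom (s⁻¹ * r)⁻¹ := by simpa [mul_inv_rev] using hx
    have hy' : α.act (s⁻¹ * r) x = y := hy
    have hyd : y ∈ α.dom (s⁻¹ * r) := hy' ▸ (α.bijOn (s⁻¹ * r)).mapsTo hxd
    have hyd' : α.act (s⁻¹ * r) x ∈ α.dom (r⁻¹ * s)⁻¹ := by
      simpa [mul_inv_rev, hy] using hyd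
    have h := α.act_comp (r⁻¹ * s) (s⁻¹ * r) x hxd hyd'
    refine ⟨by simpa [mul_inv_rev] using hyd, ?_⟩
    have h2 := h.2
    rw [hy] at h2
    have : α.act ((r⁻¹ * s) * (s⁻¹ * r)) x = x := by
      simpa [mul_assoc] using α.act_one x
    rw [this] at h2
    simp [h2.symm]
  · rintro ⟨r, x⟩ ⟨s, y⟩ ⟨t, z⟩ ⟨hx, hxy⟩ ⟨hy, hyz⟩
    have hxd : x ∈ α.dom (s⁻¹ * r)⁻¹ := by simpa [mul_inv_rev] using hx
    have hyd : α.act (s⁻¹ * r) x ∈ α.dom (t⁻¹ * s)⁻¹ := by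
      simpa [mul_inv_rev, hxy] using hy
    have h := α.act_comp (t⁻¹ * s) (s⁻¹ * r) x hxd hyd
    have hmul : (t⁻¹ * s) * (s⁻¹ * r) = t⁻¹ * r := by group
    rw [hmul] at h
    refine ⟨by simpa [mul_inv_rev] using h.1, ?_⟩
    rw [h.2, hxy, hyz]
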